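/- Let A and B be n×n Hermitian matrices with empirical spectral distribution functions F_A(t) = (1/n)·#{i : λ_i(A) ≤ t} and F_B(t) = (1/n)·#{i : λ_i(B) ≤ t}. Then sup_{t∈ℝ} |F_A(t) − F_B(t)| ≤ rank(A − B)/n. -/

import Mathlib

namespace RankDiffAux

open Matrix Finset Submodule

variable {n : ℕ}

noncomputable section

lemma repr_toEuclideanLin {M : Matrix (Fin n) (Fin n) ℂ} (hM : M.IsHermitian)
    (x : EuclideanSpace ℂ (Fin n)) (i : Fin n) :
    hM.eigenvectorBasis.repr (Matrix.toEuclideanLin M x) i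
      = (hM.eigenvalues i : ℂ) * hM.eigenvectorBasis.repr x i := by
  have hsym := (Matrix.isHermitian_iff_isSymmetric).1 hM
  have hev : Matrix.toEuclideanLin M (hM.eigenvectorBasis i)
      = (hM.eigenvalues i : ℂ) • hM.eigenvectorBasis i := by
    have := hM.mulVec_eigenvectorBasis i
    ext j
    have := congrFun this j
    simpa [Matrix.toEuclideanLin_apply, Complex.real_smul] using this
  rw [OrthonormalBasis.repr_apply_apply, OrthonormalBasis.repr_apply_apply,
    ← hsym (hM.eigenvectorBasis i) x, hev]
  simp [inner_smul_left, Complex.conj_ofReal, Finset.mul_sum, mul_assoc]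
  rw [RCLike.real_smul_eq_coe_smul (K := ℂ), inner_smul_left]; simp

lemma re_inner_toEuclideanLin {M : Matrix (Fin n) (Fin n) ℂ} (hM : M.IsHermitian)
    (x : EuclideanSpace ℂ (Fin n)) :
    Complex.re (inner ℂ x (Matrix.toEuclideanLin M x) : ℂ)
      = ∑ i, hM.eigenvalues i * ‖hM.eigenvectorBasis.repr x i‖ ^ 2 := by
  have h1 : (inner ℂ x (Matrix.toEuclideanLin M x) : ℂ)
      = inner ℂ (hM.eigenvectorBasis.repr x) (hM.eigenvectorBasis.repr (Matrix.toEuclideanLin M x)) := by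
    rw [LinearIsometryEquiv.inner_map_map]
  rw [h1, PiLp.inner_apply, Complex.re_sum]
  refine Finset.sum_congr rfl fun i _ => ?_
  rw [repr_toEuclideanLin hM x i]
  have h2 : (inner ℂ (hM.eigenvectorBasis.repr x i) ((hM.eigenvalues i : ℂ) * hM.eigenvectorBasis.repr x i) : ℂ)
      = (hM.eigenvalues i : ℂ) * ((starRingEnd ℂ) (hM.eigenvectorBasis.repr x i) * hM.eigenvectorBasis.repr x i) := by
    simp [RCLike.inner_apply]; ring
  rw [h2, mul_comm ((starRingEnd ℂ) _), Complex.mul_conj]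
  simp [Complex.normSq_eq_norm_sq, sq]

lemma norm_sq_eq_sum_repr {M : Matrix (Fin n) (Fin n) ℂ} (hM : M.IsHermitian)
    (x : EuclideanSpace ℂ (Fin n)) :
    ‖x‖ ^ 2 = ∑ i, ‖hM.eigenvectorBasis.repr x i‖ ^ 2 := by
  rw [← hM.eigenvectorBasis.repr.norm_map x, EuclideanSpace.norm_eq, Real.sq_sqrt]
  · exact Finset.sum_nonneg fun i _ => sq_nonneg _

lemma repr_eq_zero_of_mem_span {M : Matrix (Fin n) (Fin n) ℂ} (hM : M.IsHermitian)
    {s : Set (Fin n)} {x : EuclideanSpace ℂ (Fin n)}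
    (hx : x ∈ Submodule.span ℂ (hM.eigenvectorBasis '' s)) {i : Fin n} (hi : i ∉ s) :
    hM.eigenvectorBasis.repr x i = 0 := by
  classical
  have h : x ∈ Submodule.span ℂ (hM.eigenvectorBasis.toBasis '' s) := by
    simpa [OrthonormalBasis.coe_toBasis] using hx
  have h2 := (Module.Basis.mem_span_image _).1 h
  by_contra hne
  have : i ∈ (hM.eigenvectorBasis.toBasis.repr x).support := by
    simp only [Finsupp.mem_support_iff]
    rwa [hM.eigenvectorBasis.coe_toBasis_repr_apply]
  exact hi (h2 this)

lemma quad_le {M : Matrix (Fin n) (Fin n) ℂ} (hM : M.IsHermitian) (t : ℝ)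
    {x : EuclideanSpace ℂ (Fin n)}
    (hx : x ∈ Submodule.span ℂ (hM.eigenvectorBasis '' {i | hM.eigenvalues i ≤ t})) :
    Complex.re (inner ℂ x (Matrix.toEuclideanLin M x) : ℂ) ≤ t * ‖x‖ ^ 2 := by
  rw [re_inner_toEuclideanLin, norm_sq_eq_sum_repr hM, Finset.mul_sum]
  refine Finset.sum_le_sum fun i _ => ?_
  by_cases hi : hM.eigenvalues i ≤ t
  · exact mul_le_mul_of_nonneg_right hi (sq_nonneg _)
  · rw [repr_eq_zero_of_mem_span hM hx hi]; simp

lemma quad_lt {M : Matrix (Fin n) (Fin n) ℂ} (hM : M.IsHermitian) (t : ℝ)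
    {x : EuclideanSpace ℂ (Fin n)}
    (hx : x ∈ Submodule.span ℂ (hM.eigenvectorBasis '' {i | t < hM.eigenvalues i}))
    (hx0 : x ≠ 0) :
    t * ‖x‖ ^ 2 < Complex.re (inner ℂ x (Matrix.toEuclideanLin M x) : ℂ) := by
  rw [re_inner_toEuclideanLin hM, norm_sq_eq_sum_repr hM, Finset.mul_sum, ← sub_pos,
    ← Finset.sum_sub_distrib]
  have hex : ∃ i, hM.eigenvectorBasis.repr x i ≠ 0 := by
    by_contra hc
    push_neg at hc
    apply hx0
    have : hM.eigenvectorBasis.repr x = 0 := by ext i; exact hc i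
    simpa using congrArg hM.eigenvectorBasis.repr.symm this
  obtain ⟨i, hi⟩ := hex
  have his : t < hM.eigenvalues i := by
    by_contra hc
    exact hi (repr_eq_zero_of_mem_span hM hx (by simpa using hc))
  refine Finset.sum_pos' (fun j _ => ?_) ⟨i, Finset.mem_univ i, ?_⟩
  · by_cases hj : t < hM.eigenvalues j
    · have : t * ‖hM.eigenvectorBasis.repr x j‖ ^ 2 ≤ hM.eigenvalues j * ‖hM.eigenvectorBasis.repr x j‖ ^ 2 :=
        mul_le_mul_of_nonneg_right hj.le (sq_nonneg _)
      linarith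
    · rw [repr_eq_zero_of_mem_span hM hx (by simpa using hj)]; simp
  · have h0 : (0:ℝ) < ‖hM.eigenvectorBasis.repr x i‖ := norm_pos_iff.2 hi
    have hnorm : 0 < ‖hM.eigenvectorBasis.repr x i‖ ^ 2 := pow_pos h0 2
    nlinarith

lemma finrank_span_eigen {M : Matrix (Fin n) (Fin n) ℂ} (hM : M.IsHermitian)
    (p : Fin n → Prop) [DecidablePred p] :
    Module.finrank ℂ (Submodule.span ℂ (hM.eigenvectorBasis '' {i | p i}))
      = (Finset.univ.filter p).card := by
  classical
  rw [Set.image_eq_range]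
  have hli : LinearIndependent ℂ (fun i : {i | p i} => hM.eigenvectorBasis i) :=
    (hM.eigenvectorBasis.orthonormal.linearIndependent).comp Subtype.val Subtype.val_injective
  rw [finrank_span_eq_card hli]
  simp [Fintype.card_subtype]

lemma finrank_ker_add_rank (C : Matrix (Fin n) (Fin n) ℂ) :
    Module.finrank ℂ (LinearMap.ker (Matrix.toEuclideanLin C)) + C.rank = n := by
  have h1 := LinearMap.finrank_range_add_finrank_ker (Matrix.toEuclideanLin C)
  have h2 : C.rank = Module.finrank ℂ (LinearMap.range (Matrix.toEuclideanLin C)) := by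
    rw [Matrix.rank_eq_finrank_range_toLin C (EuclideanSpace.basisFun (Fin n) ℂ).toBasis
      (EuclideanSpace.basisFun (Fin n) ℂ).toBasis, ← Matrix.toEuclideanLin_eq_toLin_orthonormal]
  rw [h2, add_comm, h1, finrank_euclideanSpace_fin]

lemma key_count (A B : Matrix (Fin n) (Fin n) ℂ) (hA : A.IsHermitian) (hB : B.IsHermitian)
    (t : ℝ) :
    (Finset.univ.filter fun i => hA.eigenvalues i ≤ t).card ≤
      (Finset.univ.filter fun i => hB.eigenvalues i ≤ t).card + (A - B).rank := by
  classical
  set E := EuclideanSpace ℂ (Fin n)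
  set U := Submodule.span ℂ (hA.eigenvectorBasis '' {i | hA.eigenvalues i ≤ t}) with hU
  set V := Submodule.span ℂ (hB.eigenvectorBasis '' {i | t < hB.eigenvalues i}) with hV
  set W := LinearMap.ker (Matrix.toEuclideanLin (A - B)) with hW
  have htriv : U ⊓ (V ⊓ W) = ⊥ := by
    rw [Submodule.eq_bot_iff]
    rintro x ⟨hxU, hxV, hxW⟩
    by_contra hx0
    have h1 := quad_le hA t hxU
    have h2 := quad_lt hB t hxV hx0
    have h3 : Matrix.toEuclideanLin A x = Matrix.toEuclideanLin B x := by
      have h4 : Matrix.toEuclideanLin (A - B) x = 0 := hxW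
      rw [map_sub, LinearMap.sub_apply, sub_eq_zero] at h4
      exact h4
    rw [h3] at h1
    linarith
  have dU : Module.finrank ℂ U = (Finset.univ.filter fun i => hA.eigenvalues i ≤ t).card :=
    finrank_span_eigen hA _
  have dV : Module.finrank ℂ V = (Finset.univ.filter fun i => t < hB.eigenvalues i).card :=
    finrank_span_eigen hB _
  have dW : Module.finrank ℂ W + (A - B).rank = n := finrank_ker_add_rank (A - B)
  have hfil : (Finset.univ.filter fun i => t < hB.eigenvalues i)
      = (Finset.univ.filter fun i => ¬ hB.eigenvalues i ≤ t) :=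
    Finset.filter_congr (fun i _ => by simp [not_le])
  rw [hfil] at dV
  have hb : (Finset.univ.filter fun i => hB.eigenvalues i ≤ t).card
      + (Finset.univ.filter fun i => ¬ hB.eigenvalues i ≤ t).card = n := by
    simpa using Finset.card_filter_add_card_filter_not
      (s := Finset.univ) (p := fun i => hB.eigenvalues i ≤ t)
  have hVW : Module.finrank ℂ V + Module.finrank ℂ W
      ≤ n + Module.finrank ℂ (V ⊓ W : Submodule ℂ E) := by
    rw [← Submodule.finrank_sup_add_finrank_inf_eq V W]
    have hle : Module.finrank ℂ (V ⊔ W : Submodule ℂ E) ≤ n := by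
      simpa [finrank_euclideanSpace_fin] using Submodule.finrank_le (V ⊔ W)
    exact Nat.add_le_add_right hle _
  have hUVW : Module.finrank ℂ U + Module.finrank ℂ (V ⊓ W : Submodule ℂ E) ≤ n := by
    have heq := Submodule.finrank_sup_add_finrank_inf_eq U (V ⊓ W)
    rw [htriv, finrank_bot, add_zero] at heq
    rw [← heq]
    simpa [finrank_euclideanSpace_fin] using Submodule.finrank_le (U ⊔ (V ⊓ W))
  omega

end
end RankDiffAux

/-- **rank difference inequality.** For Hermitian `A, B`,
the empirical spectral distribution functions differ by at most `rank(A−B)/n`. -/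
theorem rank_difference_inequality {n : ℕ} (A B : Matrix (Fin n) (Fin n) ℂ)
    (hA : A.IsHermitian) (hB : B.IsHermitian) :
    ∀ t : ℝ,
      |((Finset.univ.filter fun i => hA.eigenvalues i ≤ t).card : ℝ) / n
        - ((Finset.univ.filter fun i => hB.eigenvalues i ≤ t).card : ℝ) / n|
        ≤ ((A - B).rank : ℝ) / n := by
  intro t
  have h1 := RankDiffAux.key_count A B hA hB t
  have h2 := RankDiffAux.key_count B A hB hA t
  have hr : (B - A).rank = (A - B).rank := by
    have hBA : B - A = -(A - B) := by abel
    rw [hBA]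
    unfold Matrix.rank
    have hm : Matrix.mulVecLin (-(A - B)) = -Matrix.mulVecLin (A - B) := by
      ext x j; simp [Matrix.mulVecLin, Matrix.neg_mulVec]
    rw [hm, LinearMap.range_neg]
  rw [hr] at h2
  rcases Nat.eq_zero_or_pos n with hn | hn
  · subst hn
    simp
  · have hnpos : (0:ℝ) < n := by exact_mod_cast hn
    rw [div_sub_div_same, abs_div, abs_of_pos hnpos, (div_le_div_iff_of_pos_right hnpos)]
    rw [abs_sub_le_iff]
    constructor
    · have : ((Finset.univ.filter fun i => hA.eigenvalues i ≤ t).card : ℝ)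
        ≤ ((Finset.univ.filter fun i => hB.eigenvalues i ≤ t).card : ℝ) + ((A - B).rank : ℝ) := by
        exact_mod_cast h1
      linarith
    · have : ((Finset.univ.filter fun i => hB.eigenvalues i ≤ t).card : ℝ)
        ≤ ((Finset.univ.filter fun i => hA.eigenvalues i ≤ t).card : ℝ) + ((A - B).rank : ℝ) := by
        exact_mod_cast h2
      linarith
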